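/- Let R be a commutative unital ring, I an ideal of R, and M a flat R-module such that the inverse system {I^k ⊗_R M}_{k≥1} (with transition maps induced by the inclusions I^{k+1} ⊆ I^k) satisfies the Mittag-Leffler condition: for each k there exists j ≥ k such that for all l ≥ j, the image of I^l ⊗_R M → I^k ⊗_R M equals the image of I^j ⊗_R M → I^k ⊗_R M. Then there is a short exact sequence 0 → F_I(M) → M → Λ_I(M) → 0; in particular Λ_I(M) ≅ M/F_I(M) and F_I(M) = Ker(M → Λ_I(M)), where F_I(M) = lim_k (I^k ⊗_R M) and Λ_I(M) = lim_k M/I^k M is the I-adic completion. -/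

import Mathlib

/-!
STATEMENT 7: Let `R` be a commutative unital ring, `I` an ideal of `R`, and `M` a flat
`R`-module such that the inverse system `{I^k ⊗_R M}_{k ≥ 1}` (with transition maps induced
by the inclusions `I^{k+1} ⊆ I^k`) satisfies the Mittag-Leffler condition. Then there is a
short exact sequence `0 → F_I(M) → M → Λ_I(M) → 0`, where `F_I(M) = lim_k (I^k ⊗_R M)` and
`Λ_I(M) = lim_k M/I^k M` is the `I`-adic completion; in particular `Λ_I(M) ≅ M/F_I(M)` and
`F_I(M) = Ker(M → Λ_I(M))`.

Short exactness is expressed as: the canonical map `F_I(M) → M` is injective, its range is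
the kernel of the canonical map `M → Λ_I(M)`, and the latter map is surjective. We use
Mathlib's `AdicCompletion` for `Λ_I` with its canonical map `AdicCompletion.of`.
-/

universe u

open TensorProduct

/-- The inverse limit of an inverse system of `R`-modules indexed by `ℕ`
(with transition maps `f k l h : G l →ₗ[R] G k` for `h : k ≤ l`), realized as the submodule
of compatible families in the product. -/
def invLimit (R : Type u) [CommRing R] (G : ℕ → Type u) [∀ k, AddCommGroup (G k)]
    [∀ k, Module R (G k)] (f : ∀ k l : ℕ, k ≤ l → G l →ₗ[R] G k) :
    Submodule R (∀ k, G k) where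
  carrier := { x | ∀ (k l : ℕ) (h : k ≤ l), f k l h (x l) = x k }
  add_mem' := by
    intro a b ha hb k l h
    simp [ha k l h, hb k l h]
  zero_mem' := by
    intro k l h
    simp
  smul_mem' := by
    intro c a ha k l h
    simp [ha k l h]

/-- The inverse system `k ↦ I^(k+1) ⊗_R M` with transition maps induced by the inclusions
`I^(l+1) ⊆ I^(k+1)` for `k ≤ l`. -/
noncomputable def tensorPowDiagram (R : Type u) [CommRing R] (I : Ideal R) (M : Type u)
    [AddCommGroup M] [Module R M] :
    ∀ k l : ℕ, k ≤ l → (↥(I ^ (l + 1)) ⊗[R] M) →ₗ[R] (↥(I ^ (k + 1)) ⊗[R] M) :=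
  fun _ _ h =>
    LinearMap.rTensor M (Submodule.inclusion (Ideal.pow_le_pow_right (by omega)))

/-- `F_I(M) = lim_{k ≥ 1} (I^k ⊗_R M)`, the dual of the ideal transform. -/
noncomputable abbrev dualTransform (R : Type u) [CommRing R] (I : Ideal R) (M : Type u)
    [AddCommGroup M] [Module R M] : Submodule R (∀ k : ℕ, ↥(I ^ (k + 1)) ⊗[R] M) :=
  invLimit R (fun k : ℕ => ↥(I ^ (k + 1)) ⊗[R] M) (tensorPowDiagram R I M)

/-- The canonical map `F_I(M) → M`, given by following the degree-one component
`I ⊗_R M → R ⊗_R M ≅ M`. -/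
noncomputable def fromDualTransform (R : Type u) [CommRing R] (I : Ideal R) (M : Type u)
    [AddCommGroup M] [Module R M] : ↥(dualTransform R I M) →ₗ[R] M :=
  (((TensorProduct.lid R M).toLinearMap.comp
      (LinearMap.rTensor M (Submodule.subtype (I ^ (0 + 1))))).comp
    (LinearMap.proj 0)).comp (Submodule.subtype (dualTransform R I M))

section Aux

variable (R : Type u) [CommRing R] (I : Ideal R) (M : Type u) [AddCommGroup M] [Module R M]

/-- The canonical map `I^(k+1) ⊗ M → M`. -/
noncomputable def gmap (k : ℕ) : (↥(I ^ (k + 1)) ⊗[R] M) →ₗ[R] M :=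
  (TensorProduct.lid R M).toLinearMap.comp
    (LinearMap.rTensor M (Submodule.subtype (I ^ (k + 1))))

lemma gmap_comp (k l : ℕ) (h : k ≤ l) :
    (gmap R I M k).comp (tensorPowDiagram R I M k l h) = gmap R I M l := by
  unfold gmap tensorPowDiagram
  rw [LinearMap.comp_assoc, ← LinearMap.rTensor_comp, Submodule.subtype_comp_inclusion]

lemma gmap_tmul (k : ℕ) (i : ↥(I ^ (k + 1))) (m : M) :
    gmap R I M k (i ⊗ₜ m) = (i : R) • m := by
  simp [gmap]

lemma gmap_range (k : ℕ) :
    LinearMap.range (gmap R I M k) = (I ^ (k + 1)) • (⊤ : Submodule R M) := by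
  apply le_antisymm
  · rintro _ ⟨x, rfl⟩
    induction x using TensorProduct.induction_on with
    | zero => simp
    | tmul i m =>
      rw [gmap_tmul]
      exact Submodule.smul_mem_smul i.2 Submodule.mem_top
    | add x y hx hy =>
      rw [map_add]
      exact Submodule.add_mem _ hx hy
  · rw [Submodule.smul_le]
    intro r hr m _
    exact ⟨⟨r, hr⟩ ⊗ₜ m, gmap_tmul R I M k ⟨r, hr⟩ m⟩

lemma gmap_injective (hflat : Module.Flat R M) (k : ℕ) :
    Function.Injective (gmap R I M k) := by
  haveI := hflat
  exact (TensorProduct.lid R M).injective.comp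
    (Module.Flat.rTensor_preserves_injective_linearMap _ (Submodule.injective_subtype _))

lemma gmap_eval (x : ↥(dualTransform R I M)) (k : ℕ) :
    gmap R I M k (x.1 k) = fromDualTransform R I M x := by
  have h1 : tensorPowDiagram R I M 0 k (Nat.zero_le k) (x.1 k) = x.1 0 :=
    x.2 0 k (Nat.zero_le k)
  have h2 := congrArg (fun f => f (x.1 k)) (gmap_comp R I M 0 k (Nat.zero_le k))
  simp only [LinearMap.comp_apply] at h2
  rw [← h2, h1]
  rfl

end Aux

theorem stmt7 (R : Type u) [CommRing R] (I : Ideal R) (M : Type u) [AddCommGroup M]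
    [Module R M] (hflat : Module.Flat R M)
    (hML : ∀ k : ℕ, ∃ j : ℕ, ∃ hkj : k ≤ j, ∀ l : ℕ, ∀ hjl : j ≤ l,
      LinearMap.range (tensorPowDiagram R I M k l (hkj.trans hjl)) =
        LinearMap.range (tensorPowDiagram R I M k j hkj)) :
    Function.Injective (fromDualTransform R I M) ∧
      LinearMap.range (fromDualTransform R I M) = LinearMap.ker (AdicCompletion.of I M) ∧
      Function.Surjective (AdicCompletion.of I M) := by
  have hginj := gmap_injective R I M hflat
  refine ⟨?_, ?_, ?_⟩
  · -- injectivity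
    intro x y hxy
    apply Subtype.ext
    funext k
    apply hginj k
    rw [gmap_eval, gmap_eval, hxy]
  · -- range = kernel
    apply le_antisymm
    · rintro _ ⟨x, rfl⟩
      rw [LinearMap.mem_ker]
      apply AdicCompletion.ext
      intro n
      rw [AdicCompletion.of_apply, AdicCompletion.val_zero, Pi.zero_apply, Submodule.mkQ_apply,
        Submodule.Quotient.mk_eq_zero]
      have h1 : fromDualTransform R I M x ∈ (I ^ (n + 1)) • (⊤ : Submodule R M) := by
        rw [← gmap_range, ← gmap_eval R I M x n]
        exact ⟨x.1 n, rfl⟩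
      exact Submodule.smul_mono_left (Ideal.pow_le_pow_right (Nat.le_succ n)) h1
    · intro m hm
      rw [LinearMap.mem_ker] at hm
      have hm' : ∀ n : ℕ, m ∈ (I ^ n) • (⊤ : Submodule R M) := by
        intro n
        have := congrArg (fun y => AdicCompletion.eval I M n y) hm
        simp only [AdicCompletion.eval_of, map_zero, Submodule.mkQ_apply,
          Submodule.Quotient.mk_eq_zero] at this
        exact this
      have hx : ∀ k : ℕ, ∃ y : ↥(I ^ (k + 1)) ⊗[R] M, gmap R I M k y = m := by
        intro k
        have : m ∈ LinearMap.range (gmap R I M k) := by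
          rw [gmap_range]; exact hm' (k + 1)
        exact this
      choose y hy using hx
      have hmem : y ∈ dualTransform R I M := by
        intro k l h
        apply hginj k
        have h2 := congrArg (fun f => f (y l)) (gmap_comp R I M k l h)
        simp only [LinearMap.comp_apply] at h2
        rw [h2, hy, hy]
      refine ⟨⟨y, hmem⟩, ?_⟩
      have : fromDualTransform R I M ⟨y, hmem⟩ = gmap R I M 0 (y 0) :=
        (gmap_eval R I M ⟨y, hmem⟩ 0).symm
      rw [this, hy]
  · -- surjectivity
    obtain ⟨j, hj, hstab⟩ := hML 0
    have hIM : ∀ l : ℕ, j ≤ l →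
        ((I ^ (l + 1)) • (⊤ : Submodule R M) : Submodule R M) = (I ^ (j + 1)) • ⊤ := by
      intro l hl
      have key : ∀ (l' : ℕ) (h : (0:ℕ) ≤ l'),
          Submodule.map (gmap R I M 0) (LinearMap.range (tensorPowDiagram R I M 0 l' h)) =
            (I ^ (l' + 1)) • (⊤ : Submodule R M) := by
        intro l' h
        rw [← LinearMap.range_comp, gmap_comp, gmap_range]
      calc ((I ^ (l + 1)) • (⊤ : Submodule R M) : Submodule R M)
          = Submodule.map (gmap R I M 0)
              (LinearMap.range (tensorPowDiagram R I M 0 l (hj.trans hl))) :=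
            (key l (hj.trans hl)).symm
        _ = Submodule.map (gmap R I M 0)
              (LinearMap.range (tensorPowDiagram R I M 0 j hj)) := by rw [hstab l hl]
        _ = (I ^ (j + 1)) • ⊤ := key j hj
    have hinj : ∀ (n : ℕ) (h : j + 1 ≤ n),
        Function.Injective (AdicCompletion.transitionMap I M h) := by
      intro n h a b hab
      obtain ⟨u, rfl⟩ := Submodule.mkQ_surjective _ a
      obtain ⟨v, rfl⟩ := Submodule.mkQ_surjective _ b
      simp only [Submodule.mkQ_apply, Submodule.mapQ_apply, LinearMap.id_apply] at hab ⊢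
      rw [Submodule.Quotient.eq] at hab ⊢
      have heq : ((I ^ n) • (⊤ : Submodule R M) : Submodule R M) = (I ^ (j + 1)) • ⊤ := by
        have hn1 : n - 1 + 1 = n := Nat.sub_add_cancel (Nat.le_trans (Nat.le_add_left 1 j) h)
        have := hIM (n - 1) (by omega)
        rwa [hn1] at this
      rwa [heq]
    intro x
    obtain ⟨m, hm⟩ := Submodule.mkQ_surjective _ (x.val (j + 1))
    refine ⟨m, ?_⟩
    apply AdicCompletion.ext
    intro n
    rcases le_or_gt n (j + 1) with hn | hn
    · have h1 : AdicCompletion.transitionMap I M hn (x.val (j + 1)) = x.val n := x.2 hn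
      rw [AdicCompletion.of_apply, ← h1, ← hm, Submodule.mkQ_apply, Submodule.mkQ_apply,
        Submodule.mapQ_apply, LinearMap.id_apply]
    · have hn' : j + 1 ≤ n := le_of_lt hn
      apply hinj n hn'
      have h1 : AdicCompletion.transitionMap I M hn' (x.val n) = x.val (j + 1) := x.2 hn'
      rw [h1, AdicCompletion.of_apply, Submodule.mkQ_apply, Submodule.mapQ_apply, LinearMap.id_apply,
        ← hm, Submodule.mkQ_apply]
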